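/- Let γ: (-2ε,2ε) → E be piecewise C² (with corner at 0) and let δ ∈ (0,ε]. Then for every t ∈ (-ε,ε) with |t| > δ²/100, γ_δ is twice differentiable at t and γ_δ″(t) = ∫_ℝ γ″(t − σ_δ(t)s) · (1 − s·δ·σ′(t/δ))² · φ(s) ds − ∫_ℝ γ′(t − σ_δ(t)s) · s · σ″(t/δ) · φ(s) ds. -/

import Mathlib

open MeasureTheory Set

/-- The variable mollification scale `σ_δ(t) = δ² σ(t/δ)`. -/
noncomputable def sigmaDel (σ : ℝ → ℝ) (δ t : ℝ) : ℝ := δ ^ 2 * σ (t / δ)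

/-- The variable-scale mollification `γ_δ(s) = ∫ γ(s - σ_δ(s) t) φ(t) dt` (Bochner integral). -/
noncomputable def mollify {E : Type*} [NormedAddCommGroup E] [NormedSpace ℝ E]
    (φ σ : ℝ → ℝ) (δ : ℝ) (γ : ℝ → E) (s : ℝ) : E :=
  ∫ t : ℝ, φ t • γ (s - sigmaDel σ δ s * t)

set_option maxHeartbeats 1000000 in
theorem mollify_second_deriv_away_from_corner
    {E : Type*} [NormedAddCommGroup E] [NormedSpace ℝ E] [CompleteSpace E]
    (ε : ℝ) (hε0 : 0 < ε) (hε1 : ε ≤ 1)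
    (φ σ : ℝ → ℝ)
    (hφsm : ContDiff ℝ (⊤ : ℕ∞) φ) (hφsupp : Function.support φ ⊆ Set.Icc (-1) 1)
    (hφ0 : ∀ t, 0 ≤ φ t) (hφ1 : ∀ t, φ t ≤ 1) (hφint : (∫ t : ℝ, φ t) = 1)
    (hσsm : ContDiff ℝ (⊤ : ℕ∞) σ) (hσsupp : Function.support σ ⊆ Set.Icc (-(1/2)) (1/2))
    (hσ0 : ∀ t, 0 ≤ σ t) (hσle : ∀ t, σ t ≤ 1/100)
    (hσeq : ∀ t : ℝ, |t| ≤ 1/4 → σ t = 1/100)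
    (hσpos : ∀ t : ℝ, 1/4 < |t| → |t| < 1/2 → 0 < σ t)
    (γ : ℝ → E)
    (hγcont : ContinuousOn γ (Set.Ioo (-(2*ε)) (2*ε)))
    (hγm : ContDiffOn ℝ 2 γ (Set.Ioc (-(2*ε)) 0))
    (hγp : ContDiffOn ℝ 2 γ (Set.Ico 0 (2*ε)))
    (γ' : ℝ → E)
    (hγ'1 : ∀ u ∈ Set.Ioo (-(2*ε)) (2*ε), u ≠ 0 → HasDerivAt γ (γ' u) u)
    (hγ'0 : HasDerivWithinAt γ (γ' 0) (Set.Ici 0) 0)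
    (γ'' : ℝ → E)
    (hγ''1 : ∀ u ∈ Set.Ioo (-(2*ε)) (2*ε), u ≠ 0 → HasDerivAt γ' (γ'' u) u)
    (hγ''0 : HasDerivWithinAt γ' (γ'' 0) (Set.Ici 0) 0)
    (δ : ℝ) (hδ0 : 0 < δ) (hδε : δ ≤ ε)
 :
    ∀ t ∈ Set.Ioo (-ε) ε, δ^2/100 < |t| →
      HasDerivAt (deriv (mollify φ σ δ γ))
        ((∫ s : ℝ, ((1 - s * δ * deriv σ (t/δ))^2 * φ s) • γ'' (t - sigmaDel σ δ t * s)) -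
          (∫ s : ℝ, (s * deriv (deriv σ) (t/δ) * φ s) • γ' (t - sigmaDel σ δ t * s))) t := by
  intro t ht hct
  obtain ⟨ht1, ht2⟩ := ht
  have htabs : |t| < ε := abs_lt.mpr ⟨ht1, ht2⟩
  have hδ1 : δ ≤ 1 := hδε.trans hε1
  set c : ℝ := δ^2/100 with hc_def
  have hc0 : 0 < c := by positivity
  have hcε : c < ε := by nlinarith
  set r : ℝ := (|t| - c)/4 with hr_def
  set R : ℝ := (|t| + c)/2 with hR_def
  have hr0 : 0 < r := by rw [hr_def]; linarith
  have hR0 : 0 < R := by rw [hR_def]; positivity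
  have hrcR : r + c < R := by rw [hr_def, hR_def]; linarith
  have hRt : R < |t| := by rw [hR_def]; linarith
  -- basic facts about points near t
  have hJsub : ∀ u : ℝ, |u - t| ≤ R → u ∈ Set.Ioo (-(2*ε)) (2*ε) ∧ u ≠ 0 := by
    intro u hu
    have h1 : |u| ≤ |t| + R := by
      have := abs_sub_abs_le_abs_sub u t
      linarith
    have h2 : |t| - R ≤ |u| := by
      have := abs_sub_abs_le_abs_sub t u
      rw [abs_sub_comm t u] at this
      linarith
    have h3 : |t| + R < 2*ε := by
      rw [hR_def]; nlinarith [abs_nonneg t]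
    obtain ⟨h4, h5⟩ := abs_le.mp h1
    refine ⟨⟨by linarith, by linarith⟩, ?_⟩
    intro h0
    rw [h0, abs_zero] at h2
    linarith
  have hJabs : ∀ u ∈ Set.Icc (t - R) (t + R), |u - t| ≤ R := by
    intro u hu
    exact abs_le.mpr ⟨by linarith [hu.1], by linarith [hu.2]⟩
  have hsubIoo : Set.Icc (t - R) (t + R) ⊆ Set.Ioo (-(2*ε)) (2*ε) :=
    fun u hu => (hJsub u (hJabs u hu)).1
  -- bounds on sigmaDel
  have hsd0 : ∀ x, 0 ≤ sigmaDel σ δ x := fun x => mul_nonneg (by positivity) (hσ0 _)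
  have hsdc : ∀ x, sigmaDel σ δ x ≤ c := by
    intro x
    have := hσle (x/δ)
    have h2 : δ^2 * σ (x/δ) ≤ δ^2 * (1/100) := by nlinarith [sq_nonneg δ]
    calc sigmaDel σ δ x = δ^2 * σ (x/δ) := rfl
      _ ≤ δ^2 * (1/100) := h2
      _ = c := by rw [hc_def]; ring
  -- membership of mollification arguments
  have hmem : ∀ x, |x - t| < r → ∀ s : ℝ, |s| ≤ 1 →
      (x - sigmaDel σ δ x * s) ∈ Set.Ioo (t - R) (t + R) := by
    intro x hx s hs
    have h1 : |sigmaDel σ δ x * s| ≤ c := by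
      rw [abs_mul, abs_of_nonneg (hsd0 x)]
      calc sigmaDel σ δ x * |s| ≤ c * 1 :=
            mul_le_mul (hsdc x) hs (abs_nonneg s) hc0.le
        _ = c := mul_one c
    have h2 : |x - sigmaDel σ δ x * s - t| < r + c := by
      have h3 : x - sigmaDel σ δ x * s - t = (x - t) + (-(sigmaDel σ δ x * s)) := by ring
      rw [h3]
      calc |(x - t) + (-(sigmaDel σ δ x * s))| ≤ |x - t| + |(-(sigmaDel σ δ x * s))| :=
            abs_add_le _ _
        _ = |x - t| + |sigmaDel σ δ x * s| := by rw [abs_neg]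
        _ < r + c := by linarith
    have h4 : |x - sigmaDel σ δ x * s - t| < R := h2.trans hrcR
    obtain ⟨h5, h6⟩ := abs_lt.mp h4
    exact ⟨by linarith, by linarith⟩
  -- support facts
  have hφc : Continuous φ := hφsm.continuous
  have hφz : ∀ s : ℝ, s ∉ Set.Icc (-1:ℝ) 1 → φ s = 0 := by
    intro s hs
    by_contra h
    exact hs (hφsupp (Function.mem_support.mpr h))
  have hφabs : ∀ s : ℝ, φ s ≠ 0 → |s| ≤ 1 := by
    intro s hs
    have := hφsupp (Function.mem_support.mpr hs)
    rw [Set.mem_Icc] at this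
    exact abs_le.mpr this
  -- t ≠ 0
  have ht0 : t ≠ 0 := by
    intro h
    rw [h, abs_zero] at hct
    linarith
  -- continuity of γ' on the interval
  have hγ'cont : ContinuousOn γ' (Set.Icc (t - R) (t + R)) := by
    intro u hu
    have h := hJsub u (hJabs u hu)
    exact ((hγ''1 u h.1 h.2).continuousAt).continuousWithinAt
  -- continuity of γ'' on the interval
  have hγ''cont : ContinuousOn γ'' (Set.Icc (t - R) (t + R)) := by
    have key : ∀ O : Set ℝ, IsOpen O → O ⊆ Set.Ioo (-(2*ε)) (2*ε) → (0:ℝ) ∉ O →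
        ContDiffOn ℝ 2 γ O → Set.Icc (t - R) (t + R) ⊆ O →
        ContinuousOn γ'' (Set.Icc (t - R) (t + R)) := by
      intro O hO hOsub hO0 hγO hsub
      have hd1 : ContDiffOn ℝ 1 (deriv γ) O := hγO.deriv_of_isOpen hO (by norm_num)
      have hd2 : ContinuousOn (deriv (deriv γ)) O := hd1.continuousOn_deriv_of_isOpen hO le_rfl
      have heqd : Set.EqOn γ'' (deriv (deriv γ)) O := by
        intro u hu
        have hu' := hOsub hu
        have hune : u ≠ 0 := fun h => hO0 (h ▸ hu)
        have h1 : Set.EqOn (deriv γ) γ' O := by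
          intro v hv
          have hvne : v ≠ 0 := fun h => hO0 (h ▸ hv)
          exact (hγ'1 v (hOsub hv) hvne).deriv
        have h2 : deriv γ =ᶠ[nhds u] γ' := Filter.eventuallyEq_of_mem (hO.mem_nhds hu) h1
        have h3 : deriv (deriv γ) u = deriv γ' u := h2.deriv_eq
        have h4 : deriv γ' u = γ'' u := (hγ''1 u hu' hune).deriv
        rw [h3, h4]
      exact (hd2.congr heqd).mono hsub
    rcases lt_or_gt_of_ne ht0 with htneg | htpos
    · have habs : |t| = -t := abs_of_neg htneg
      refine key (Set.Ioo (-(2*ε)) 0) isOpen_Ioo ?_ (by simp) (hγm.mono Set.Ioo_subset_Ioc_self) ?_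
      · intro u hu
        exact ⟨hu.1, by linarith [hu.2, hε0]⟩
      · intro u hu
        have h1 := hu.1; have h2 := hu.2
        constructor
        · have : t - R > -(2*ε) := by rw [habs] at hRt htabs; linarith
          linarith
        · have : t + R < 0 := by rw [habs] at hRt; linarith
          linarith
    · have habs : |t| = t := abs_of_pos htpos
      refine key (Set.Ioo 0 (2*ε)) isOpen_Ioo ?_ (by simp) (hγp.mono Set.Ioo_subset_Ico_self) ?_
      · intro u hu
        exact ⟨by linarith [hu.1, hε0], hu.2⟩
      · intro u hu
        have h1 := hu.1; have h2 := hu.2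
        constructor
        · have : t - R > 0 := by rw [habs] at hRt; linarith
          linarith
        · have : t + R < 2*ε := by rw [habs] at htabs; linarith
          linarith
  -- projection onto the interval
  have hRR : t - R ≤ t + R := by linarith
  set proj : ℝ → ℝ := fun u => max (t - R) (min (t + R) u) with hproj_def
  have hproj_mem : ∀ u, proj u ∈ Set.Icc (t - R) (t + R) :=
    fun u => ⟨le_max_left _ _, max_le hRR (min_le_left _ _)⟩
  have hproj_id : ∀ u ∈ Set.Icc (t - R) (t + R), proj u = u := by
    intro u hu
    rw [hproj_def]
    simp only
    rw [min_eq_right hu.2, max_eq_right hu.1]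
  have hproj_cont : Continuous proj := continuous_const.max (continuous_const.min continuous_id)
  -- continuous extensions
  set Γ0 : ℝ → E := fun u => γ (proj u) with hΓ0_def
  set Γ1 : ℝ → E := fun u => γ' (proj u) with hΓ1_def
  set Γ2 : ℝ → E := fun u => γ'' (proj u) with hΓ2_def
  have hΓ0c : Continuous Γ0 :=
    (hγcont.mono hsubIoo).comp_continuous hproj_cont hproj_mem
  have hΓ1c : Continuous Γ1 := hγ'cont.comp_continuous hproj_cont hproj_mem
  have hΓ2c : Continuous Γ2 := hγ''cont.comp_continuous hproj_cont hproj_mem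
  -- bounds
  obtain ⟨C1, hC1⟩ := (isCompact_Icc :
    IsCompact (Set.Icc (t - R) (t + R))).exists_bound_of_continuousOn hγ'cont
  have hC1' : ∀ u, ‖Γ1 u‖ ≤ C1 := fun u => hC1 _ (hproj_mem u)
  have hC1p : 0 ≤ C1 := le_trans (norm_nonneg _) (hC1' 0)
  obtain ⟨C2, hC2⟩ := (isCompact_Icc :
    IsCompact (Set.Icc (t - R) (t + R))).exists_bound_of_continuousOn hγ''cont
  have hC2' : ∀ u, ‖Γ2 u‖ ≤ C2 := fun u => hC2 _ (hproj_mem u)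
  have hC2p : 0 ≤ C2 := le_trans (norm_nonneg _) (hC2' 0)
  -- derivatives of σ
  have hσ1 : ContDiff ℝ (⊤:ℕ∞) (deriv σ) := (contDiff_infty_iff_deriv.mp hσsm).2
  have hσ2 : ContDiff ℝ (⊤:ℕ∞) (deriv (deriv σ)) := (contDiff_infty_iff_deriv.mp hσ1).2
  have hσcs : HasCompactSupport σ :=
    HasCompactSupport.intro (K := Set.Icc (-(1/2):ℝ) (1/2)) isCompact_Icc (fun x hx => by
      by_contra h
      exact hx (hσsupp (Function.mem_support.mpr h)))
  obtain ⟨D1, hD1⟩ := hσcs.deriv.exists_bound_of_continuous hσ1.continuous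
  have hD1' : ∀ x, |deriv σ x| ≤ D1 := fun x => by
    have := hD1 x; rwa [Real.norm_eq_abs] at this
  have hD1p : 0 ≤ D1 := le_trans (abs_nonneg _) (hD1' 0)
  obtain ⟨D2, hD2⟩ := hσcs.deriv.deriv.exists_bound_of_continuous hσ2.continuous
  have hD2' : ∀ x, |deriv (deriv σ) x| ≤ D2 := fun x => by
    have := hD2 x; rwa [Real.norm_eq_abs] at this
  have hD2p : 0 ≤ D2 := le_trans (abs_nonneg _) (hD2' 0)
  -- derivative of sigmaDel
  have hsd' : ∀ x : ℝ, HasDerivAt (sigmaDel σ δ) (δ * deriv σ (x/δ)) x := by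
    intro x
    have h1 : HasDerivAt (fun y : ℝ => y / δ) (1/δ) x := (hasDerivAt_id x).div_const δ
    have h2 : HasDerivAt σ (deriv σ (x/δ)) (x/δ) :=
      ((hσsm.differentiable (by simp)) (x/δ)).hasDerivAt
    have h3 := (h2.comp x h1).const_mul (δ^2)
    have h4 : δ^2 * (deriv σ (x/δ) * (1/δ)) = δ * deriv σ (x/δ) := by
      field_simp
    rw [← h4]
    exact h3
  have hg1' : ∀ (x s : ℝ),
      HasDerivAt (fun y => y - sigmaDel σ δ y * s) (1 - δ * deriv σ (x/δ) * s) x :=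
    fun x s => (hasDerivAt_id x).sub ((hsd' x).mul_const s)
  -- derivatives of the extensions
  have hΓ0' : ∀ u ∈ Set.Ioo (t - R) (t + R), HasDerivAt Γ0 (Γ1 u) u := by
    intro u hu
    have huI : u ∈ Set.Icc (t - R) (t + R) := Set.Ioo_subset_Icc_self hu
    have hJ := hJsub u (hJabs u huI)
    have h := hγ'1 u hJ.1 hJ.2
    have heq : γ =ᶠ[nhds u] Γ0 :=
      Filter.eventuallyEq_of_mem (isOpen_Ioo.mem_nhds hu) (fun v hv => by
        simp only [hΓ0_def, hproj_id v (Set.Ioo_subset_Icc_self hv)])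
    have h2 := h.congr_of_eventuallyEq heq.symm
    have h3 : Γ1 u = γ' u := by
      simp only [hΓ1_def, hproj_id u huI]
    rwa [h3]
  have hΓ1' : ∀ u ∈ Set.Ioo (t - R) (t + R), HasDerivAt Γ1 (Γ2 u) u := by
    intro u hu
    have huI : u ∈ Set.Icc (t - R) (t + R) := Set.Ioo_subset_Icc_self hu
    have hJ := hJsub u (hJabs u huI)
    have h := hγ''1 u hJ.1 hJ.2
    have heq : γ' =ᶠ[nhds u] Γ1 :=
      Filter.eventuallyEq_of_mem (isOpen_Ioo.mem_nhds hu) (fun v hv => by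
        simp only [hΓ1_def, hproj_id v (Set.Ioo_subset_Icc_self hv)])
    have h2 := h.congr_of_eventuallyEq heq.symm
    have h3 : Γ2 u = γ'' u := by
      simp only [hΓ2_def, hproj_id u huI]
    rwa [h3]
  -- integrability of bound functions
  have hbint : ∀ B : ℝ, Integrable (Set.indicator (Set.Icc (-1:ℝ) 1) (fun _ => B)) volume := by
    intro B
    rw [integrable_indicator_iff measurableSet_Icc]
    exact integrableOn_const measure_Icc_lt_top.ne
  -- step 1: derivative of the Γ0-mollification
  have step1 : ∀ x ∈ Metric.ball t r,
      HasDerivAt (fun y => ∫ s : ℝ, φ s • Γ0 (y - sigmaDel σ δ y * s))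
        (∫ s : ℝ, ((1 - s * δ * deriv σ (x/δ)) * φ s) • Γ1 (x - sigmaDel σ δ x * s)) x := by
    intro x hx
    rw [Metric.mem_ball, Real.dist_eq] at hx
    have hρ0 : 0 < r - |x - t| := by linarith
    have hball : ∀ y ∈ Metric.ball x (r - |x - t|), |y - t| < r := by
      intro y hy
      rw [Metric.mem_ball, Real.dist_eq] at hy
      calc |y - t| ≤ |y - x| + |x - t| := abs_sub_le y x t
        _ < (r - |x - t|) + |x - t| := by linarith
        _ = r := by ring
    refine (hasDerivAt_integral_of_dominated_loc_of_deriv_le (μ := volume)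
      (F := fun y s => φ s • Γ0 (y - sigmaDel σ δ y * s))
      (F' := fun y s => ((1 - s * δ * deriv σ (y/δ)) * φ s) • Γ1 (y - sigmaDel σ δ y * s))
      (bound := Set.indicator (Set.Icc (-1:ℝ) 1) (fun _ => (1 + δ * D1) * C1))
      (Metric.ball_mem_nhds x hρ0) ?_ ?_ ?_ ?_ (hbint _) ?_).2
    · refine Filter.Eventually.of_forall (fun y => ?_)
      exact Continuous.aestronglyMeasurable (by fun_prop)
    · apply Continuous.integrable_of_hasCompactSupport
      · fun_prop
      · exact HasCompactSupport.intro (K := Set.Icc (-1:ℝ) 1) isCompact_Icc (fun s hs => by simp [hφz s hs])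
    · exact Continuous.aestronglyMeasurable (by fun_prop)
    · refine Filter.Eventually.of_forall (fun s => fun y hy => ?_)
      by_cases hs : s ∈ Set.Icc (-1:ℝ) 1
      · rw [Set.indicator_of_mem hs]
        have hs1 : |s| ≤ 1 := abs_le.mpr hs
        have hX : |s * δ * deriv σ (y/δ)| ≤ δ * D1 := by
          rw [abs_mul, abs_mul, abs_of_pos hδ0]
          calc |s| * δ * |deriv σ (y/δ)| ≤ 1 * δ * D1 := by
                apply mul_le_mul _ (hD1' _) (abs_nonneg _) (by positivity)
                exact mul_le_mul hs1 le_rfl hδ0.le zero_le_one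
            _ = δ * D1 := by ring
        have h1 : |1 - s * δ * deriv σ (y/δ)| ≤ 1 + δ * D1 := by
          have hXle := le_abs_self (s * δ * deriv σ (y/δ))
          have hXge := neg_abs_le (s * δ * deriv σ (y/δ))
          exact abs_le.mpr ⟨by linarith, by linarith⟩
        have h2 : |φ s| ≤ 1 := by rw [abs_of_nonneg (hφ0 s)]; exact hφ1 s
        rw [norm_smul, Real.norm_eq_abs, abs_mul]
        calc |1 - s * δ * deriv σ (y/δ)| * |φ s| * ‖Γ1 (y - sigmaDel σ δ y * s)‖
            ≤ (1 + δ * D1) * 1 * C1 := by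
              apply mul_le_mul _ (hC1' _) (norm_nonneg _) (by positivity)
              apply mul_le_mul h1 h2 (abs_nonneg _) (by positivity)
          _ = (1 + δ * D1) * C1 := by ring
      · rw [Set.indicator_of_notMem hs]
        simp [hφz s hs]
    · refine Filter.Eventually.of_forall (fun s => fun y hy => ?_)
      have hyt : |y - t| < r := hball y hy
      by_cases hφs : φ s = 0
      · simpa [hφs] using hasDerivAt_const y (0:E)
      · have hs1 : |s| ≤ 1 := hφabs s hφs
        have hu := hmem y hyt s hs1
        have h := ((hΓ0' _ hu).scomp y (hg1' y s)).const_smul (φ s)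
        have hval : ((1 - s * δ * deriv σ (y/δ)) * φ s) • Γ1 (y - sigmaDel σ δ y * s)
            = φ s • ((1 - δ * deriv σ (y/δ) * s) • Γ1 (y - sigmaDel σ δ y * s)) := by
          rw [smul_smul]; congr 1; ring
        beta_reduce
        rw [hval]
        exact h
  -- step 2: second derivative at t
  have step2 : HasDerivAt
      (fun y => ∫ s : ℝ, ((1 - s * δ * deriv σ (y/δ)) * φ s) • Γ1 (y - sigmaDel σ δ y * s))
      (∫ s : ℝ, (((1 - s * δ * deriv σ (t/δ))^2 * φ s) • Γ2 (t - sigmaDel σ δ t * s) -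
        (s * deriv (deriv σ) (t/δ) * φ s) • Γ1 (t - sigmaDel σ δ t * s))) t := by
    refine (hasDerivAt_integral_of_dominated_loc_of_deriv_le (μ := volume)
      (F := fun y s => ((1 - s * δ * deriv σ (y/δ)) * φ s) • Γ1 (y - sigmaDel σ δ y * s))
      (F' := fun y s => ((1 - s * δ * deriv σ (y/δ))^2 * φ s) • Γ2 (y - sigmaDel σ δ y * s) -
        (s * deriv (deriv σ) (y/δ) * φ s) • Γ1 (y - sigmaDel σ δ y * s))
      (bound := Set.indicator (Set.Icc (-1:ℝ) 1)
        (fun _ => (1 + δ * D1)^2 * C2 + D2 * C1))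
      (Metric.ball_mem_nhds t hr0) ?_ ?_ ?_ ?_ (hbint _) ?_).2
    · refine Filter.Eventually.of_forall (fun y => ?_)
      exact Continuous.aestronglyMeasurable (by fun_prop)
    · apply Continuous.integrable_of_hasCompactSupport
      · fun_prop
      · exact HasCompactSupport.intro (K := Set.Icc (-1:ℝ) 1) isCompact_Icc (fun s hs => by
          simp [hφz s hs])
    · exact Continuous.aestronglyMeasurable (by fun_prop)
    · refine Filter.Eventually.of_forall (fun s => fun y hy => ?_)
      by_cases hs : s ∈ Set.Icc (-1:ℝ) 1
      · rw [Set.indicator_of_mem hs]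
        have hs1 : |s| ≤ 1 := abs_le.mpr hs
        have hX : |s * δ * deriv σ (y/δ)| ≤ δ * D1 := by
          rw [abs_mul, abs_mul, abs_of_pos hδ0]
          calc |s| * δ * |deriv σ (y/δ)| ≤ 1 * δ * D1 := by
                apply mul_le_mul _ (hD1' _) (abs_nonneg _) (by positivity)
                exact mul_le_mul hs1 le_rfl hδ0.le zero_le_one
            _ = δ * D1 := by ring
        have h1 : |1 - s * δ * deriv σ (y/δ)| ≤ 1 + δ * D1 := by
          have hXle := le_abs_self (s * δ * deriv σ (y/δ))
          have hXge := neg_abs_le (s * δ * deriv σ (y/δ))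
          exact abs_le.mpr ⟨by linarith, by linarith⟩
        have h2 : |φ s| ≤ 1 := by rw [abs_of_nonneg (hφ0 s)]; exact hφ1 s
        calc ‖((1 - s * δ * deriv σ (y/δ))^2 * φ s) • Γ2 (y - sigmaDel σ δ y * s) -
              (s * deriv (deriv σ) (y/δ) * φ s) • Γ1 (y - sigmaDel σ δ y * s)‖
            ≤ ‖((1 - s * δ * deriv σ (y/δ))^2 * φ s) • Γ2 (y - sigmaDel σ δ y * s)‖ +
              ‖(s * deriv (deriv σ) (y/δ) * φ s) • Γ1 (y - sigmaDel σ δ y * s)‖ :=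
              norm_sub_le _ _
          _ ≤ (1 + δ * D1)^2 * C2 + D2 * C1 := by
              apply add_le_add
              · rw [norm_smul, Real.norm_eq_abs, abs_mul, abs_pow]
                calc |1 - s * δ * deriv σ (y/δ)|^2 * |φ s| * ‖Γ2 (y - sigmaDel σ δ y * s)‖
                    ≤ ((1 + δ * D1)^2 * 1) * C2 := by
                      apply mul_le_mul _ (hC2' _) (norm_nonneg _) (by positivity)
                      apply mul_le_mul _ h2 (abs_nonneg _) (by positivity)
                      exact pow_le_pow_left₀ (abs_nonneg _) h1 2
                  _ = (1 + δ * D1)^2 * C2 := by ring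
              · rw [norm_smul, Real.norm_eq_abs, abs_mul, abs_mul]
                calc |s| * |deriv (deriv σ) (y/δ)| * |φ s| * ‖Γ1 (y - sigmaDel σ δ y * s)‖
                    ≤ ((1 * D2) * 1) * C1 := by
                      apply mul_le_mul _ (hC1' _) (norm_nonneg _) (by positivity)
                      apply mul_le_mul _ h2 (abs_nonneg _) (by positivity)
                      exact mul_le_mul hs1 (hD2' _) (abs_nonneg _) zero_le_one
                  _ = D2 * C1 := by ring
      · rw [Set.indicator_of_notMem hs]
        simp [hφz s hs]
    · refine Filter.Eventually.of_forall (fun s => fun y hy => ?_)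
      rw [Metric.mem_ball, Real.dist_eq] at hy
      by_cases hφs : φ s = 0
      · simpa [hφs] using hasDerivAt_const y (0:E)
      · have hs1 : |s| ≤ 1 := hφabs s hφs
        have hu := hmem y hy s hs1
        have hin : HasDerivAt (fun z : ℝ => deriv σ (z/δ)) (deriv (deriv σ) (y/δ) * (1/δ)) y :=
          by have hc := HasDerivAt.comp y (((hσ1.differentiable (by simp)) (y/δ)).hasDerivAt)
               ((hasDerivAt_id y).div_const δ)
             exact hc
        have ha : HasDerivAt (fun z : ℝ => (1 - s * δ * deriv σ (z/δ)) * φ s)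
            (-(s * deriv (deriv σ) (y/δ)) * φ s) y := by
          have h' := ((hin.const_mul (s*δ)).const_sub 1).mul_const (φ s)
          have hval : -(s * deriv (deriv σ) (y/δ)) * φ s
              = -(s * δ * (deriv (deriv σ) (y/δ) * (1/δ))) * φ s := by
            field_simp
          rw [hval]
          exact h'
        have hv : HasDerivAt (fun z => Γ1 (z - sigmaDel σ δ z * s))
            ((1 - δ * deriv σ (y/δ) * s) • Γ2 (y - sigmaDel σ δ y * s)) y :=
          HasDerivAt.scomp (g₁ := Γ1) (h := fun z => z - sigmaDel σ δ z * s) y (hΓ1' _ hu) (hg1' y s)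
        have h := ha.smul hv
        beta_reduce
        convert h using 1
        · rfl
        rw [smul_smul]
        module
  -- mollify agrees with the Γ0-mollification near t
  have hmollify_eq : ∀ y, |y - t| < r →
      mollify φ σ δ γ y = ∫ s : ℝ, φ s • Γ0 (y - sigmaDel σ δ y * s) := by
    intro y hy
    unfold mollify
    apply integral_congr_ae
    refine Filter.Eventually.of_forall (fun s => ?_)
    by_cases hφs : φ s = 0
    · simp [hφs]
    · have hs1 : |s| ≤ 1 := hφabs s hφs
      have hu := hmem y hy s hs1
      simp only [hΓ0_def, hproj_id _ (Set.Ioo_subset_Icc_self hu)]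
  -- deriv of mollify agrees with the Γ1-integral near t
  have hderiv_eq : deriv (mollify φ σ δ γ) =ᶠ[nhds t]
      (fun y => ∫ s : ℝ, ((1 - s * δ * deriv σ (y/δ)) * φ s) • Γ1 (y - sigmaDel σ δ y * s)) := by
    filter_upwards [Metric.isOpen_ball.mem_nhds (Metric.mem_ball_self hr0)] with x hx
    have h1 := step1 x hx
    have h2 : HasDerivAt (mollify φ σ δ γ)
        (∫ s : ℝ, ((1 - s * δ * deriv σ (x/δ)) * φ s) • Γ1 (x - sigmaDel σ δ x * s)) x := by
      apply h1.congr_of_eventuallyEq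
      filter_upwards [Metric.isOpen_ball.mem_nhds hx] with y hy
      rw [Metric.mem_ball, Real.dist_eq] at hy
      exact hmollify_eq y hy
    exact h2.deriv
  have hfinal := step2.congr_of_eventuallyEq hderiv_eq
  -- split the integral and return to γ', γ''
  have hAint : Integrable (fun s : ℝ =>
      ((1 - s * δ * deriv σ (t/δ))^2 * φ s) • Γ2 (t - sigmaDel σ δ t * s)) volume := by
    apply Continuous.integrable_of_hasCompactSupport
    · fun_prop
    · exact HasCompactSupport.intro (K := Set.Icc (-1:ℝ) 1) isCompact_Icc (fun s hs => by
        simp [hφz s hs])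
  have hBint : Integrable (fun s : ℝ =>
      (s * deriv (deriv σ) (t/δ) * φ s) • Γ1 (t - sigmaDel σ δ t * s)) volume := by
    apply Continuous.integrable_of_hasCompactSupport
    · fun_prop
    · exact HasCompactSupport.intro (K := Set.Icc (-1:ℝ) 1) isCompact_Icc (fun s hs => by
        simp [hφz s hs])
  rw [integral_sub hAint hBint] at hfinal
  have htt : |t - t| < r := by simpa using hr0
  have hA : (∫ s : ℝ, ((1 - s * δ * deriv σ (t/δ))^2 * φ s) • Γ2 (t - sigmaDel σ δ t * s))
      = ∫ s : ℝ, ((1 - s * δ * deriv σ (t/δ))^2 * φ s) • γ'' (t - sigmaDel σ δ t * s) := by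
    apply integral_congr_ae
    refine Filter.Eventually.of_forall (fun s => ?_)
    by_cases hφs : φ s = 0
    · simp [hφs]
    · have hs1 : |s| ≤ 1 := hφabs s hφs
      have hu := hmem t htt s hs1
      simp only [hΓ2_def, hproj_id _ (Set.Ioo_subset_Icc_self hu)]
  have hB : (∫ s : ℝ, (s * deriv (deriv σ) (t/δ) * φ s) • Γ1 (t - sigmaDel σ δ t * s))
      = ∫ s : ℝ, (s * deriv (deriv σ) (t/δ) * φ s) • γ' (t - sigmaDel σ δ t * s) := by
    apply integral_congr_ae
    refine Filter.Eventually.of_forall (fun s => ?_)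
    by_cases hφs : φ s = 0
    · simp [hφs]
    · have hs1 : |s| ≤ 1 := hφabs s hφs
      have hu := hmem t htt s hs1
      simp only [hΓ1_def, hproj_id _ (Set.Ioo_subset_Icc_self hu)]
  rw [hA, hB] at hfinal
  exact hfinal
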